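/- Let S be a skeleton with head e and periphery S₀. If u, v ∈ S₀ satisfy αe + βu = γe + δv with α, γ ∈ ℝ and β, δ ≥ 0, then α = γ, and either β = δ = 0 or u = v. -/

import Mathlib

open Set

/-- A *skeleton* with head `e` in a real vector space `X`. -/
structure IsSkeleton {X : Type*} [AddCommGroup X] [Module ℝ X] (S : Set X) (e : X) : Prop where
  head_ne : e ≠ 0
  zero_mem : (0 : X) ∈ S
  head_mem : e ∈ S
  compl_mem : ∀ u ∈ S, e - u ∈ S
  comb : ∀ u ∈ S, ∀ v ∈ S, ∀ l : ℝ, 0 ≤ l → l ≤ 1 →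
    ∃ w ∈ S \ {0, e}, ∃ a b : ℝ, 0 ≤ a ∧ 0 ≤ b ∧
      l • u + (1 - l) • v = a • e + b • w
  head_sum : ∀ n : ℕ, 2 ≤ n → ∀ u : Fin n → X, ∀ a : Fin n → ℝ,
    (∀ i, u i ∈ S \ {0, e}) → (∀ i, 0 < a i) →
    e = ∑ i, a i • u i → ∀ j, 1 ≤ ∑ i ∈ Finset.univ.erase j, a i

section Aux

variable {X : Type*} [AddCommGroup X] [Module ℝ X] {S : Set X} {e : X}

lemma IsSkeleton.compl_core (h : IsSkeleton S e) {u : X} (hu : u ∈ S \ {0, e}) :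
    e - u ∈ S \ {0, e} := by
  obtain ⟨huS, hne⟩ := hu
  simp only [mem_insert_iff, mem_singleton_iff, not_or] at hne
  refine ⟨h.compl_mem u huS, ?_⟩
  simp only [mem_insert_iff, mem_singleton_iff, not_or]
  constructor
  · intro h0
    exact hne.2 ((sub_eq_zero.mp h0).symm)
  · intro h0
    apply hne.1
    have : e - u - e = e - e := by rw [h0]
    simpa using this.symm

lemma IsSkeleton.key (h : IsSkeleton S e) {u v : X} (hu : u ∈ S \ {0, e})
    (hv : v ∈ S \ {0, e}) {p q : ℝ} (hq : 0 < q) (hrel : v = p • e + q • u) : p ≤ 0 := by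
  by_contra hp
  push_neg at hp
  have hpq : 0 < p + q := by linarith
  have hpq0 : p + q ≠ 0 := ne_of_gt hpq
  have he : e = (1 / (p + q)) • v + (q / (p + q)) • (e - u) := by
    have h1 : (p + q) • e = v + q • (e - u) := by rw [hrel]; module
    have h2 : (p + q) • ((1 / (p + q)) • v + (q / (p + q)) • (e - u)) =
        v + q • (e - u) := by
      rw [smul_add, smul_smul, smul_smul]
      rw [mul_one_div, div_self hpq0, one_smul, mul_div_cancel₀ _ hpq0]
    exact smul_right_injective X hpq0 (h1.trans h2.symm)
  have hsum : e = ∑ i : Fin 2, (![1 / (p + q), q / (p + q)] : Fin 2 → ℝ) i •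
      (![v, e - u] : Fin 2 → X) i := by
    rw [Fin.sum_univ_two]
    simpa using he
  have hmem : ∀ i : Fin 2, (![v, e - u] : Fin 2 → X) i ∈ S \ {0, e} := by
    intro i
    fin_cases i
    · exact hv
    · exact h.compl_core hu
  have hpos : ∀ i : Fin 2, (0 : ℝ) < (![1 / (p + q), q / (p + q)] : Fin 2 → ℝ) i := by
    intro i
    fin_cases i
    · simpa using (by positivity : (0:ℝ) < 1 / (p + q))
    · simpa using (by positivity : (0:ℝ) < q / (p + q))
  have hhs := h.head_sum 2 le_rfl _ _ hmem hpos hsum 0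
  have herase : (Finset.univ.erase (0 : Fin 2)) = {1} := by decide
  rw [herase, Finset.sum_singleton] at hhs
  simp only [Matrix.cons_val_one, Matrix.head_cons, Matrix.cons_val_zero] at hhs
  rw [le_div_iff₀ hpq] at hhs
  linarith

lemma IsSkeleton.key2 (h : IsSkeleton S e) {u v : X} (hu : u ∈ S \ {0, e})
    (hv : v ∈ S \ {0, e}) {p q : ℝ} (hq : 0 < q) (hrel : v = p • e + q • u) : p = 0 := by
  have hq0 : q ≠ 0 := ne_of_gt hq
  have h1 : p ≤ 0 := h.key hu hv hq hrel
  have hu' : u = (-(p / q)) • e + (1 / q) • v := by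
    have ha : q • u = (-p) • e + v := by rw [hrel]; module
    have hb : q • ((-(p / q)) • e + (1 / q) • v) = (-p) • e + v := by
      rw [smul_add, smul_smul, smul_smul, mul_one_div, div_self hq0, one_smul]
      congr 1
      rw [mul_neg, mul_div_cancel₀ _ hq0]
    exact smul_right_injective X hq0 (ha.trans hb.symm)
  have h2 : -(p / q) ≤ 0 := h.key hv hu (by positivity) hu'
  have h3 : 0 ≤ p / q := by linarith
  rcases div_nonneg_iff.mp h3 with ⟨hp, _⟩ | ⟨_, hqle⟩
  · linarith
  · linarith

lemma IsSkeleton.key' (h : IsSkeleton S e) {u v : X} (hu : u ∈ S \ {0, e})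
    (hv : v ∈ S \ {0, e}) {p q : ℝ} (hq : 0 < q) (hrel : v = p • e + q • u) :
    p = 0 ∧ q = 1 ∧ v = u := by
  have hp0 : p = 0 := h.key2 hu hv hq hrel
  have hrel2 : e - v = (1 - q) • e + q • (e - u) := by
    rw [hrel, hp0]; module
  have hq1 : 1 - q = 0 := h.key2 (h.compl_core hu) (h.compl_core hv) hq hrel2
  have hq' : q = 1 := by linarith
  refine ⟨hp0, hq', ?_⟩
  rw [hrel, hp0, hq']
  simp

lemma IsSkeleton.not_scalar (h : IsSkeleton S e) {u : X} (hu : u ∈ S \ {0, e})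
    {s : ℝ} (hs : u = s • e) : False := by
  obtain ⟨huS, hne⟩ := hu
  simp only [mem_insert_iff, mem_singleton_iff, not_or] at hne
  have hs0 : s ≠ 0 := by
    intro h0
    apply hne.1
    rw [hs, h0, zero_smul]
  rcases lt_or_gt_of_ne hs0 with hneg | hpos
  · have hrel : e - u = ((1 - s) / 2) • e + ((1:ℝ) / 2) • (e - u) := by
      rw [hs]; match_scalars <;> ring
    have := h.key2 (h.compl_core ⟨huS, by
      simp only [mem_insert_iff, mem_singleton_iff, not_or]; exact hne⟩)
      (h.compl_core ⟨huS, by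
      simp only [mem_insert_iff, mem_singleton_iff, not_or]; exact hne⟩)
      (by norm_num : (0:ℝ) < (1:ℝ) / 2) hrel
    have : (1 : ℝ) - s = 0 := by linarith
    linarith
  · have hrel : u = (s / 2) • e + ((1:ℝ) / 2) • u := by
      rw [hs]; match_scalars <;> ring
    have hmem : u ∈ S \ {0, e} := ⟨huS, by
      simp only [mem_insert_iff, mem_singleton_iff, not_or]; exact hne⟩
    have := h.key2 hmem hmem (by norm_num : (0:ℝ) < (1:ℝ) / 2) hrel
    have : s = 0 := by linarith
    exact hs0 this

end Aux

theorem skeleton_unique_representation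
    {X : Type*} [AddCommGroup X] [Module ℝ X] {S : Set X} {e : X}
    (h : IsSkeleton S e) {u v : X} (hu : u ∈ S \ {0, e}) (hv : v ∈ S \ {0, e})
    {a b c d : ℝ} (hb : 0 ≤ b) (hd : 0 ≤ d)
    (heq : a • e + b • u = c • e + d • v) :
    a = c ∧ ((b = 0 ∧ d = 0) ∨ u = v) := by
  rcases eq_or_lt_of_le hd with hd0 | hdpos
  · -- d = 0
    rcases eq_or_lt_of_le hb with hb0 | hbpos
    · -- b = 0, d = 0
      rw [← hb0, ← hd0, zero_smul, zero_smul, add_zero, add_zero] at heq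
      have : (a - c) • e = 0 := by rw [sub_smul, heq, sub_self]
      have hac : a - c = 0 := by
        rcases smul_eq_zero.mp this with h' | h'
        · exact h'
        · exact absurd h' h.head_ne
      exact ⟨by linarith, Or.inl ⟨hb0.symm, hd0.symm⟩⟩
    · -- b > 0, d = 0 : u = ((c-a)/b) • e, contradiction
      exfalso
      have hb0 : b ≠ 0 := ne_of_gt hbpos
      rw [← hd0, zero_smul, add_zero] at heq
      have h1 : b • u = (c - a) • e := by
        rw [sub_smul, ← heq]; abel
      have h2 : u = ((c - a) / b) • e := by
        have h3 : b • (((c - a) / b) • e) = (c - a) • e := by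
          rw [smul_smul, mul_div_cancel₀ _ hb0]
        exact smul_right_injective X hb0 (h1.trans h3.symm)
      exact h.not_scalar hu h2
  · -- d > 0
    have hd0 : d ≠ 0 := ne_of_gt hdpos
    have hdv : d • v = (a - c) • e + b • u := by
      have : d • v = a • e + b • u - c • e := by rw [heq]; abel
      rw [this]; module
    rcases eq_or_lt_of_le hb with hb0 | hbpos
    · -- b = 0 : v scalar multiple of e, contradiction
      exfalso
      rw [← hb0, zero_smul, add_zero] at hdv
      have h2 : v = ((a - c) / d) • e := by
        have h3 : d • (((a - c) / d) • e) = (a - c) • e := by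
          rw [smul_smul, mul_div_cancel₀ _ hd0]
        exact smul_right_injective X hd0 (hdv.trans h3.symm)
      exact h.not_scalar hv h2
    · -- b > 0, d > 0
      have hrel : v = ((a - c) / d) • e + (b / d) • u := by
        have h3 : d • (((a - c) / d) • e + (b / d) • u) = (a - c) • e + b • u := by
          rw [smul_add, smul_smul, smul_smul, mul_div_cancel₀ _ hd0,
            mul_div_cancel₀ _ hd0]
        exact smul_right_injective X hd0 (hdv.trans h3.symm)
      obtain ⟨hp0, _, hvu⟩ := h.key' hu hv (by positivity) hrel
      have hac : a - c = 0 := by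
        rcases div_eq_zero_iff.mp hp0 with h' | h'
        · exact h'
        · exact absurd h' hd0
      exact ⟨by linarith, Or.inr hvu.symm⟩
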